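/- Let j and k be positive integers with j ≤ k, let c, z ∈ ℂ, and for each i ∈ {1,…,k} let r_i ∈ ℂ with |r_i| > 1. Let f_j(w) = exp(c·w^j). Then the alternating product over all 2^k subsets S of {1,…,k} (including the empty set, with P(f_j, ∅, z) = f_j(z)) satisfies ∏_{S ⊆ {1,…,k}} P(f_j, S, z)^{(−1)^{|S|−1}} = 1, i.e., Q(f_j, F_{≤k}, z) = 1, where each geometric sampling product P(f_j, S, z) converges unconditionally. -/

import Mathlib

open Complex


/-- Geometric sampling point `X_{k,n}(r) = (r^k - 1)^{1/k} / r^n` (principal branch). -/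
noncomputable def X (k n : ℕ) (r : ℂ) : ℂ := (r ^ k - 1) ^ ((k : ℂ))⁻¹ / r ^ n



lemma pnat_hasSum {x : ℂ} (hx : ‖x‖ < 1) :
    HasSum (fun n : ℕ+ => x ^ (n : ℕ)) (x * (1 - x)⁻¹) := by
  have h : HasSum (fun m : ℕ => x * x ^ m) (x * (1 - x)⁻¹) :=
    (hasSum_geometric_of_norm_lt_one hx).mul_left x
  have : HasSum ((fun n : ℕ+ => x ^ (n : ℕ)) ∘ Equiv.pnatEquivNat.symm) (x * (1 - x)⁻¹) := by
    refine h.congr_fun ?_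
    intro m
    simp [Equiv.pnatEquivNat, Nat.succPNat, pow_succ, mul_comm]
  exact Equiv.pnatEquivNat.symm.hasSum_iff.mp this

lemma cpow_inv_pow {w : ℂ} (hw : w ≠ 0) {j : ℕ} (hj : 1 ≤ j) :
    (w ^ ((j : ℂ))⁻¹) ^ j = w := by
  have hjc : (j : ℂ) ≠ 0 := Nat.cast_ne_zero.mpr (by omega)
  rw [Complex.cpow_def_of_ne_zero hw, ← Complex.exp_nat_mul]
  rw [show (j : ℂ) * (Complex.log w * (j : ℂ)⁻¹) = Complex.log w by
    field_simp]
  exact Complex.exp_log hw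

lemma X_pow_eq {i j : ℕ} {ρ : ℂ} (hρ : ρ ≠ 0) (n : ℕ+) :
    (X i n ρ) ^ j = ((ρ ^ i - 1) ^ ((i : ℂ))⁻¹) ^ j * ((ρ ^ j)⁻¹) ^ (n : ℕ) := by
  rw [X, div_pow, div_eq_mul_inv, ← inv_pow, ← inv_pow, ← pow_right_comm, inv_pow ρ, inv_pow]

lemma X_hasSum {i j : ℕ} (hj : 1 ≤ j) {ρ : ℂ} (hρ : 1 < ‖ρ‖) :
    HasSum (fun n : ℕ+ => (X i n ρ) ^ j)
      (((ρ ^ i - 1) ^ ((i : ℂ))⁻¹) ^ j * ((ρ ^ j)⁻¹ * (1 - (ρ ^ j)⁻¹)⁻¹)) ∧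
    Summable (fun n : ℕ+ => ‖(X i n ρ) ^ j‖) := by
  have hρ0 : ρ ≠ 0 := by
    intro h; rw [h] at hρ; simp at hρ; linarith
  have hx : ‖(ρ ^ j)⁻¹‖ < 1 := by
    rw [norm_inv, norm_pow]
    have h1 : (1:ℝ) < ‖ρ‖ ^ j := by
      calc (1:ℝ) < ‖ρ‖ := hρ
      _ ≤ ‖ρ‖ ^ j := le_self_pow₀ (le_of_lt hρ) (by omega)
    rw [inv_lt_one_iff₀]; right; exact h1
  have hgeo := pnat_hasSum hx
  constructor
  · refine (hgeo.mul_left _).congr_fun ?_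
    intro n; exact X_pow_eq hρ0 n
  · have : Summable (fun n : ℕ+ => ‖((ρ ^ i - 1) ^ ((i : ℂ))⁻¹) ^ j * ((ρ ^ j)⁻¹) ^ (n : ℕ)‖) := by
      simp only [norm_mul, norm_pow]
      exact Summable.mul_left _ (by
        have : Summable (fun n : ℕ+ => ((ρ ^ j)⁻¹) ^ (n : ℕ)) := (pnat_hasSum hx).summable
        simpa using this.norm)
    refine this.congr fun n => ?_
    rw [X_pow_eq hρ0 n]

def Good (κ : Type) [Fintype κ] : Prop :=
  ∀ g : κ → ℕ+ → ℂ, (∀ i, Summable fun n => ‖g i n‖) →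
    (Summable (fun ν : κ → ℕ+ => ‖∏ i, g i (ν i)‖) ∧
      (∑' ν : κ → ℕ+, ∏ i, g i (ν i)) = ∏ i, ∑' n, g i n)

lemma aux_pi (ι : Type) [Fintype ι] : Good ι := by
  refine Fintype.induction_empty_option (P := fun κ _ => Good κ) ?_ ?_ ?_ ι
  · intro α β instβ e ih
    letI : Fintype α := Fintype.ofEquiv β e.symm
    intro g hg
    obtain ⟨h1, h2⟩ := ih (fun a n => g (e a) n) (fun a => hg (e a))
    have hprod : ∀ ν : β → ℕ+, (∏ i, g i (ν i)) = ∏ a, g (e a) (ν (e a)) :=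
      fun ν => (Equiv.prod_comp e (fun i => g i (ν i))).symm
    have hE : ∀ ν : β → ℕ+, (∏ a, g (e a) (ν (e a)))
        = (fun μ : α → ℕ+ => ∏ a, g (e a) (μ a)) ((Equiv.arrowCongr e (Equiv.refl ℕ+)).symm ν) := by
      intro ν; rfl
    constructor
    · have := ((Equiv.arrowCongr e (Equiv.refl ℕ+)).symm.summable_iff
        (f := fun μ : α → ℕ+ => ‖∏ a, g (e a) (μ a)‖)).mpr h1
      refine this.congr fun ν => ?_
      simp only [Function.comp]
      rw [hprod ν, hE ν]
    · have ht := (Equiv.arrowCongr e (Equiv.refl ℕ+)).symm.tsum_eq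
        (f := fun μ : α → ℕ+ => ∏ a, g (e a) (μ a))
      calc (∑' ν : β → ℕ+, ∏ i, g i (ν i))
          = ∑' ν : β → ℕ+, (fun μ : α → ℕ+ => ∏ a, g (e a) (μ a))
              ((Equiv.arrowCongr e (Equiv.refl ℕ+)).symm ν) := by
            refine tsum_congr fun ν => ?_; rw [hprod ν, hE ν]
        _ = ∑' μ : α → ℕ+, ∏ a, g (e a) (μ a) := ht
        _ = ∏ a, ∑' n, g (e a) n := h2
        _ = ∏ i, ∑' n, g i n := Equiv.prod_comp e (fun i => ∑' n, g i n)
  · intro g hg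
    constructor
    · exact (hasSum_single (f := fun ν : PEmpty → ℕ+ => ‖∏ i, g i (ν i)‖)
        default (fun b hb => absurd (Subsingleton.elim b default) hb)).summable
    · rw [tsum_eq_single default (fun b hb => absurd (Subsingleton.elim b default) hb)]
      simp
  · intro α instα ih
    intro g hg
    obtain ⟨h1, h2⟩ := ih (fun a n => g (some a) n) (fun a => hg (some a))
    set e : (Option α → ℕ+) ≃ ℕ+ × (α → ℕ+) := Equiv.piOptionEquivProd
    have hprod : ∀ ν : Option α → ℕ+,
        (∏ i, g i (ν i)) = g none (ν none) * ∏ a, g (some a) (ν (some a)) := by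
      intro ν; exact Fintype.prod_option _
    have hsum2 : Summable (fun p : ℕ+ × (α → ℕ+) =>
        ‖g none p.1 * ∏ a, g (some a) (p.2 a)‖) := by
      have := summable_mul_of_summable_norm (f := fun n : ℕ+ => ‖g none n‖)
        (g := fun μ : α → ℕ+ => ‖∏ a, g (some a) (μ a)‖)
        (by simpa using hg none) (by simpa using h1)
      refine this.congr fun p => ?_
      simp [norm_mul]
    constructor
    · have := (e.summable_iff (f := fun p : ℕ+ × (α → ℕ+) =>
        ‖g none p.1 * ∏ a, g (some a) (p.2 a)‖)).mpr hsum2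
      refine this.congr fun ν => ?_
      simp only [Function.comp]
      rw [hprod ν]; rfl
    · have hmul := tsum_mul_tsum_of_summable_norm (f := fun n : ℕ+ => g none n)
        (g := fun μ : α → ℕ+ => ∏ a, g (some a) (μ a)) (hg none) h1
      have ht := e.tsum_eq (f := fun p : ℕ+ × (α → ℕ+) => g none p.1 * ∏ a, g (some a) (p.2 a))
      calc (∑' ν : Option α → ℕ+, ∏ i, g i (ν i))
          = ∑' ν : Option α → ℕ+, (fun p : ℕ+ × (α → ℕ+) =>
              g none p.1 * ∏ a, g (some a) (p.2 a)) (e ν) := by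
            refine tsum_congr fun ν => ?_; rw [hprod ν]; rfl
        _ = ∑' p : ℕ+ × (α → ℕ+), g none p.1 * ∏ a, g (some a) (p.2 a) := ht
        _ = (∑' n, g none n) * ∑' μ : α → ℕ+, ∏ a, g (some a) (μ a) := hmul.symm
        _ = (∑' n, g none n) * ∏ a, ∑' n, g (some a) n := by rw [h2]
        _ = ∏ i, ∑' n, g i n := (Fintype.prod_option (fun i => ∑' n, g i n)).symm

noncomputable def sV (j i : ℕ) (ρ : ℂ) : ℂ := ∑' n : ℕ+, (X i n ρ) ^ j

lemma sV_self {j : ℕ} (hj : 1 ≤ j) {ρ : ℂ} (hρ : 1 < ‖ρ‖) : sV j j ρ = 1 := by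
  have hρ0 : ρ ≠ 0 := by intro h; rw [h] at hρ; simp at hρ; linarith
  have hpow : ρ ^ j ≠ 0 := pow_ne_zero _ hρ0
  have h2 : (1 : ℝ) < ‖ρ ^ j‖ := by
    rw [norm_pow]
    calc (1:ℝ) < ‖ρ‖ := hρ
      _ ≤ ‖ρ‖ ^ j := le_self_pow₀ (le_of_lt hρ) (by omega)
  have hne : ρ ^ j - 1 ≠ 0 := by
    intro h0
    have : ρ ^ j = 1 := by linear_combination h0
    rw [this] at h2; simp at h2
  have h := (X_hasSum (i := j) hj hρ).1
  rw [sV, h.tsum_eq, cpow_inv_pow (by simpa using hne) hj]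
  have hx : (1 : ℂ) - (ρ ^ j)⁻¹ ≠ 0 := by
    rw [sub_ne_zero]
    intro h0
    apply hne
    field_simp at h0
    rw [← h0]; ring
  field_simp

lemma key (j : ℕ) (hj : 1 ≤ j) (c z : ℂ) (r : ℕ → ℂ) (S : Finset ℕ)
    (hrS : ∀ i ∈ S, 1 < ‖r i‖) :
    HasProd (fun ν : {x // x ∈ S} → ℕ+ =>
        Complex.exp (c * ((∏ i : {x // x ∈ S}, X i.1 (ν i : ℕ) (r i.1)) * z) ^ j))
      (Complex.exp (c * z ^ j * ∏ i ∈ S, sV j i (r i))) := by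
  set g : {x // x ∈ S} → ℕ+ → ℂ := fun i n => (X i.1 n (r i.1)) ^ j with hgdef
  have hg : ∀ i : {x // x ∈ S}, Summable fun n => ‖g i n‖ :=
    fun i => (X_hasSum hj (hrS i.1 i.2)).2
  obtain ⟨hs, ht⟩ := aux_pi _ g hg
  have hsum : Summable (fun ν : {x // x ∈ S} → ℕ+ => c * z ^ j * ∏ i, g i (ν i)) :=
    (hs.of_norm).mul_left _
  have htsum : (∑' ν : {x // x ∈ S} → ℕ+, c * z ^ j * ∏ i, g i (ν i))
      = c * z ^ j * ∏ i ∈ S, sV j i (r i) := by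
    rw [tsum_mul_left, ht]
    congr 1
    rw [← Finset.prod_coe_sort S (fun i => sV j i (r i))]
    rfl
  have h := htsum ▸ hsum.hasSum
  have hfun : (Complex.exp ∘ fun ν : {x // x ∈ S} → ℕ+ => c * z ^ j * ∏ i, g i (ν i))
      = fun ν : {x // x ∈ S} → ℕ+ =>
        Complex.exp (c * ((∏ i : {x // x ∈ S}, X i.1 (ν i : ℕ) (r i.1)) * z) ^ j) := by
    funext ν
    simp only [Function.comp, hgdef]
    congr 1
    rw [mul_pow, ← Finset.prod_pow]
    ring
  exact hfun ▸ h.cexp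

/-- Geometric sampling product `P(f, S, z)`. -/
noncomputable def P (f : ℂ → ℂ) (r : ℕ → ℂ) (S : Finset ℕ) (z : ℂ) : ℂ :=
  ∏' ν : {x // x ∈ S} → ℕ+, f ((∏ k : {x // x ∈ S}, X k.1 (ν k : ℕ) (r k.1)) * z)

/-- Geometric sampling quotient `Q(f, F, z) = ∏_{S ∈ F} P(f,S,z)^{(-1)^{|S|-1}}`
(the exponent `(-1)^{|S|+1}` agrees with `(-1)^{|S|-1}`, also for `S = ∅`). -/
noncomputable def Q (f : ℂ → ℂ) (r : ℕ → ℂ) (F : Finset (Finset ℕ)) (z : ℂ) : ℂ :=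
  ∏ S ∈ F, P f r S z ^ ((-1 : ℤ) ^ (S.card + 1))

/-- for `1 ≤ j ≤ k`, the function factor `f_j(w) = exp (c * w^j)`, and ratios
`r_i` with `|r_i| > 1` for `i ∈ {1,…,k}`, every geometric sampling product `P(f_j, S, z)`
for `S ⊆ {1,…,k}` converges unconditionally, and the alternating product over all `2^k`
subsets of `{1,…,k}` (including `∅`) is `Q(f_j, F_{≤ k}, z) = 1`. -/
theorem stmt_3 (j k : ℕ) (hj : 1 ≤ j) (hjk : j ≤ k) (c z : ℂ)
    (r : ℕ → ℂ) (hr : ∀ i ∈ Finset.Icc 1 k, 1 < ‖r i‖) :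
    (∀ S ∈ (Finset.Icc 1 k).powerset,
      Multipliable (fun ν : {x // x ∈ S} → ℕ+ =>
        Complex.exp (c * ((∏ i : {x // x ∈ S}, X i.1 (ν i : ℕ) (r i.1)) * z) ^ j))) ∧
    Q (fun w => Complex.exp (c * w ^ j)) r ((Finset.Icc 1 k).powerset) z = 1 := by
  have hkey : ∀ S ∈ (Finset.Icc 1 k).powerset,
      HasProd (fun ν : {x // x ∈ S} → ℕ+ =>
        Complex.exp (c * ((∏ i : {x // x ∈ S}, X i.1 (ν i : ℕ) (r i.1)) * z) ^ j))
      (Complex.exp (c * z ^ j * ∏ i ∈ S, sV j i (r i))) := by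
    intro S hS
    exact key j hj c z r S (fun i hi => hr i (Finset.mem_powerset.mp hS hi))
  refine ⟨fun S hS => (hkey S hS).multipliable, ?_⟩
  have hP : ∀ S ∈ (Finset.Icc 1 k).powerset,
      P (fun w => Complex.exp (c * w ^ j)) r S z
        = Complex.exp (c * z ^ j * ∏ i ∈ S, sV j i (r i)) := by
    intro S hS
    exact (hkey S hS).tprod_eq
  rw [Q, Finset.prod_congr rfl (fun S hS => by
    rw [hP S hS, ← Complex.exp_int_mul])]
  rw [← Complex.exp_sum, ← Complex.exp_zero]
  congr 1
  have hjmem : j ∈ Finset.Icc 1 k := Finset.mem_Icc.mpr ⟨hj, hjk⟩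
  calc ∑ S ∈ (Finset.Icc 1 k).powerset,
        (((-1 : ℤ) ^ (S.card + 1) : ℤ) : ℂ) * (c * z ^ j * ∏ i ∈ S, sV j i (r i))
      = (-(c * z ^ j)) * ∑ S ∈ (Finset.Icc 1 k).powerset,
          (∏ i ∈ S, -sV j i (r i)) * ∏ i ∈ Finset.Icc 1 k \ S, (1 : ℂ) := by
        rw [Finset.mul_sum]
        refine Finset.sum_congr rfl fun S hS => ?_
        have : ∏ i ∈ S, -sV j i (r i) = (-1 : ℂ) ^ S.card * ∏ i ∈ S, sV j i (r i) := by
          rw [show (-1:ℂ) ^ S.card = ∏ _i ∈ S, (-1:ℂ) from (Finset.prod_const _).symm,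
            ← Finset.prod_mul_distrib]
          simp
        rw [this, Finset.prod_const_one]
        push_cast
        ring
    _ = (-(c * z ^ j)) * ∏ i ∈ Finset.Icc 1 k, (-sV j i (r i) + 1) := by
        rw [Finset.prod_add]
    _ = 0 := by
        rw [Finset.prod_eq_zero hjmem (by rw [sV_self hj (hr j hjmem)]; ring)]
        ring
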